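/- For symmetric positive definite matrices P0 and P1 of size n, the matrix U = P1^{-1/2} P0^{-1/2} (P0^{1/2} P1 P0^{1/2})^{1/2} is orthogonal, i.e., U U' = I. -/

import Mathlib

open Matrix

/-- The symmetric positive definite square root of a positive definite matrix. -/
noncomputable def sqrtm {n : ℕ} {P : Matrix (Fin n) (Fin n) ℝ} (hP : P.PosDef) :
    Matrix (Fin n) (Fin n) ℝ :=
  hP.posSemidef.1.eigenvectorUnitary.1 *
    diagonal ((↑) ∘ (Real.sqrt ·) ∘ hP.posSemidef.1.eigenvalues) *
    (star hP.posSemidef.1.eigenvectorUnitary : Matrix (Fin n) (Fin n) ℝ)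

/-- Squared Frobenius norm of a real matrix. -/
noncomputable def frobSq {n : ℕ} (M : Matrix (Fin n) (Fin n) ℝ) : ℝ := (M * Mᵀ).trace

lemma sqrtm_mul_self {n : ℕ} {P : Matrix (Fin n) (Fin n) ℝ} (hP : P.PosDef) :
    sqrtm hP * sqrtm hP = P := by
  have hU : (star hP.posSemidef.1.eigenvectorUnitary : Matrix (Fin n) (Fin n) ℝ) *
      hP.posSemidef.1.eigenvectorUnitary.1 = 1 :=
    Unitary.star_mul_self_of_mem hP.posSemidef.1.eigenvectorUnitary.2
  have hd : diagonal ((fun x : ℝ => x) ∘ (Real.sqrt ·) ∘ hP.posSemidef.1.eigenvalues) *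
      diagonal ((fun x : ℝ => x) ∘ (Real.sqrt ·) ∘ hP.posSemidef.1.eigenvalues) =
      diagonal (RCLike.ofReal ∘ hP.posSemidef.1.eigenvalues) := by
    rw [diagonal_mul_diagonal]
    congr 1
    funext i
    simp [Real.mul_self_sqrt (hP.posSemidef.eigenvalues_nonneg i)]
  conv_rhs => rw [hP.posSemidef.1.spectral_theorem]
  simp only [sqrtm, Unitary.conjStarAlgAut_apply]
  calc _ = hP.posSemidef.1.eigenvectorUnitary.1 *
        (diagonal ((↑) ∘ (Real.sqrt ·) ∘ hP.posSemidef.1.eigenvalues) *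
          ((star hP.posSemidef.1.eigenvectorUnitary : Matrix (Fin n) (Fin n) ℝ) *
            hP.posSemidef.1.eigenvectorUnitary.1) *
          diagonal ((↑) ∘ (Real.sqrt ·) ∘ hP.posSemidef.1.eigenvalues)) *
        (star hP.posSemidef.1.eigenvectorUnitary : Matrix (Fin n) (Fin n) ℝ) := by
          simp only [Matrix.mul_assoc]
    _ = _ := by rw [hU, Matrix.mul_one, hd]

lemma sqrtm_transpose {n : ℕ} {P : Matrix (Fin n) (Fin n) ℝ} (hP : P.PosDef) :
    (sqrtm hP)ᵀ = sqrtm hP := by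
  simp [sqrtm, Matrix.transpose_mul, Matrix.star_eq_conjTranspose,
    Matrix.conjTranspose_eq_transpose_of_trivial, Matrix.mul_assoc]

lemma sqrtm_isUnit {n : ℕ} {P : Matrix (Fin n) (Fin n) ℝ} (hP : P.PosDef) :
    IsUnit (sqrtm hP) := by
  rw [Matrix.isUnit_iff_isUnit_det]
  have hdet : (sqrtm hP).det * (sqrtm hP).det = P.det := by
    rw [← Matrix.det_mul, sqrtm_mul_self]
  have : (sqrtm hP).det ≠ 0 := by
    intro h
    rw [h, mul_zero] at hdet
    exact hP.det_pos.ne (by rw [hdet])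
  exact this.isUnit

theorem stmt_0 {n : ℕ} {P0 P1 : Matrix (Fin n) (Fin n) ℝ}
    (hP0 : P0.PosDef) (hP1 : P1.PosDef)
    (hS : (sqrtm hP0 * P1 * sqrtm hP0).PosDef)
    (U : Matrix (Fin n) (Fin n) ℝ)
    (hU : U = (sqrtm hP1)⁻¹ * (sqrtm hP0)⁻¹ * sqrtm hS) :
    U * Uᵀ = 1 := by
  set s0 := sqrtm hP0
  set s1 := sqrtm hP1
  set t := sqrtm hS
  have h0 := sqrtm_isUnit hP0
  have h1 := sqrtm_isUnit hP1
  have h0i : s0⁻¹ * s0 = 1 := Matrix.nonsing_inv_mul _ ((Matrix.isUnit_iff_isUnit_det _).1 h0)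
  have h0i' : s0 * s0⁻¹ = 1 := Matrix.mul_nonsing_inv _ ((Matrix.isUnit_iff_isUnit_det _).1 h0)
  have h1i : s1⁻¹ * s1 = 1 := Matrix.nonsing_inv_mul _ ((Matrix.isUnit_iff_isUnit_det _).1 h1)
  have h1i' : s1 * s1⁻¹ = 1 := Matrix.mul_nonsing_inv _ ((Matrix.isUnit_iff_isUnit_det _).1 h1)
  have ht : t * t = s0 * P1 * s0 := sqrtm_mul_self hS
  have htT : tᵀ = t := sqrtm_transpose hS
  have h0T : s0⁻¹ᵀ = s0⁻¹ := by rw [Matrix.transpose_nonsing_inv, sqrtm_transpose]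
  have h1T : s1⁻¹ᵀ = s1⁻¹ := by rw [Matrix.transpose_nonsing_inv, sqrtm_transpose]
  have hP1eq : P1 = s1 * s1 := (sqrtm_mul_self hP1).symm
  rw [hU]
  rw [Matrix.transpose_mul, Matrix.transpose_mul, htT, h0T, h1T]
  calc s1⁻¹ * s0⁻¹ * t * (t * (s0⁻¹ * s1⁻¹))
      = s1⁻¹ * (s0⁻¹ * (t * t) * s0⁻¹) * s1⁻¹ := by noncomm_ring
    _ = s1⁻¹ * (s0⁻¹ * (s0 * P1 * s0) * s0⁻¹) * s1⁻¹ := by rw [ht]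
    _ = s1⁻¹ * ((s0⁻¹ * s0) * P1 * (s0 * s0⁻¹)) * s1⁻¹ := by noncomm_ring
    _ = s1⁻¹ * P1 * s1⁻¹ := by rw [h0i, h0i', Matrix.one_mul, Matrix.mul_one]
    _ = (s1⁻¹ * s1) * (s1 * s1⁻¹) := by rw [hP1eq]; noncomm_ring
    _ = 1 := by rw [h1i, h1i', Matrix.one_mul]
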